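/- (Local decomposition GL(n,ℝ) ≈ L₊↑ × pseudosymmetric matrices near the identity.) There exist open neighborhoods U, V, W of the identity matrix I in the space of real n×n matrices such that every matrix L ∈ W can be written as L = Λ · A with Λ ∈ U a Lorentz matrix (Λᵀ η Λ = η) and A ∈ V pseudosymmetric (η Aᵀ = A η), and this pair (Λ, A) ∈ U × V is unique. -/

import Mathlib

open Matrix

attribute [local instance] Matrix.linftyOpNormedRing Matrix.linftyOpNormedAlgebra

/-- The `n × n` Minkowski matrix `diag(1, -1, …, -1)`. -/
noncomputable def eta (n : ℕ) : Matrix (Fin n) (Fin n) ℝ :=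
  Matrix.diagonal (fun i => if (i : ℕ) = 0 then (1 : ℝ) else -1)

theorem eta_mul_eta (n : ℕ) : eta n * eta n = 1 := by
  rw [eta, Matrix.diagonal_mul_diagonal]
  have h : (fun i : Fin n => (if (i : ℕ) = 0 then (1:ℝ) else -1) *
      (if (i : ℕ) = 0 then (1:ℝ) else -1)) = fun _ => (1:ℝ) := by
    funext i; split <;> norm_num
  rw [h, Matrix.diagonal_one]

theorem eta_transpose (n : ℕ) : (eta n)ᵀ = eta n := Matrix.diagonal_transpose _

theorem eta_det_ne_zero (n : ℕ) : (eta n).det ≠ 0 := by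
  intro h
  have h2 := congrArg Matrix.det (eta_mul_eta n)
  rw [Matrix.det_mul, Matrix.det_one, h] at h2
  simp at h2

/-- The involution `X ↦ η Xᵀ η`. -/
noncomputable def sig (n : ℕ) (X : Matrix (Fin n) (Fin n) ℝ) : Matrix (Fin n) (Fin n) ℝ :=
  eta n * Xᵀ * eta n

theorem sig_mul (n : ℕ) (X Y : Matrix (Fin n) (Fin n) ℝ) :
    sig n (X * Y) = sig n Y * sig n X := by
  unfold sig
  rw [Matrix.transpose_mul]
  have h : eta n * Yᵀ * eta n * (eta n * Xᵀ * eta n)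
      = eta n * Yᵀ * (eta n * eta n) * Xᵀ * eta n := by
    simp only [mul_assoc]
  rw [h, eta_mul_eta, mul_one, mul_assoc (eta n) Yᵀ Xᵀ]

theorem sig_sig (n : ℕ) (X : Matrix (Fin n) (Fin n) ℝ) : sig n (sig n X) = X := by
  unfold sig
  rw [Matrix.transpose_mul, eta_transpose, Matrix.transpose_mul, eta_transpose,
    Matrix.transpose_transpose]
  rw [show eta n * (eta n * (X * eta n)) * eta n
      = (eta n * eta n) * (X * (eta n * eta n)) by simp only [mul_assoc],
    eta_mul_eta, one_mul, mul_one]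

theorem sig_one (n : ℕ) : sig n (1 : Matrix (Fin n) (Fin n) ℝ) = 1 := by
  unfold sig
  rw [Matrix.transpose_one, mul_one, eta_mul_eta]

theorem sig_continuous (n : ℕ) : Continuous (sig n) :=
  (continuous_const.matrix_mul continuous_id.matrix_transpose).matrix_mul continuous_const

theorem sig_inv (n : ℕ) (A : Matrix (Fin n) (Fin n) ℝ) (hAinv : A * A⁻¹ = 1)
    (hσA : sig n A = A) : sig n A⁻¹ = A⁻¹ := by
  have h1 : sig n A⁻¹ * sig n A = 1 := by rw [← sig_mul, hAinv, sig_one]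
  rw [hσA] at h1
  calc sig n A⁻¹ = sig n A⁻¹ * (A * A⁻¹) := by rw [hAinv, mul_one]
  _ = (sig n A⁻¹ * A) * A⁻¹ := by rw [mul_assoc]
  _ = A⁻¹ := by rw [h1, one_mul]

noncomputable def sqE (n : ℕ) : Matrix (Fin n) (Fin n) ℝ ≃L[ℝ] Matrix (Fin n) (Fin n) ℝ :=
  (LinearEquiv.smulOfNeZero ℝ _ 2 two_ne_zero).toContinuousLinearEquiv

theorem sq_deriv (n : ℕ) : HasStrictFDerivAt (fun X : Matrix (Fin n) (Fin n) ℝ => X * X)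
    (sqE n : Matrix (Fin n) (Fin n) ℝ →L[ℝ] Matrix (Fin n) (Fin n) ℝ) 1 := by
  have h := (hasStrictFDerivAt_id (1 : Matrix (Fin n) (Fin n) ℝ)).mul'
    (𝕜 := ℝ) (hasStrictFDerivAt_id (1 : Matrix (Fin n) (Fin n) ℝ))
  refine HasStrictFDerivAt.congr_fderiv h ?_
  ext X
  simp [sqE, LinearEquiv.smulOfNeZero, LinearEquiv.smulOfUnit, DistribMulAction.toLinearEquiv,
    two_smul]
  rename_i i j
  change ((1 : Matrix (Fin n) (Fin n) ℝ) * X) i j + (X * (1 : Matrix (Fin n) (Fin n) ℝ)) i j = (2:ℝ) * X i j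
  rw [one_mul, mul_one]
  ring

/-- The square map as a partial homeomorphism near `1`. -/
noncomputable def sqPH (n : ℕ) :
    OpenPartialHomeomorph (Matrix (Fin n) (Fin n) ℝ) (Matrix (Fin n) (Fin n) ℝ) :=
  HasStrictFDerivAt.toOpenPartialHomeomorph (fun X => X * X) (sq_deriv n)

theorem sqPH_apply (n : ℕ) (X : Matrix (Fin n) (Fin n) ℝ) : sqPH n X = X * X := rfl

theorem one_mem_sqPH_source (n : ℕ) : (1 : Matrix (Fin n) (Fin n) ℝ) ∈ (sqPH n).source :=
  HasStrictFDerivAt.mem_toOpenPartialHomeomorph_source (sq_deriv n)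

theorem one_mem_sqPH_target (n : ℕ) : (1 : Matrix (Fin n) (Fin n) ℝ) ∈ (sqPH n).target := by
  have := HasStrictFDerivAt.image_mem_toOpenPartialHomeomorph_target (f := fun X => X * X) (sq_deriv n)
  rw [← one_mul (1 : Matrix (Fin n) (Fin n) ℝ)]
  exact this

/-- Local decomposition `GL(n,ℝ) ≈ L₊↑ × {pseudosymmetric}` near the identity: there
are open neighborhoods `U, V, W` of the identity such that every `L ∈ W` is uniquely
`L = Λ * A` with `Λ ∈ U` Lorentz (`Λᵀ η Λ = η`) and `A ∈ V` pseudosymmetric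
(`η Aᵀ = A η`). -/
theorem local_lorentz_pseudosymmetric_decomposition (n : ℕ) (hn : 1 ≤ n) :
    ∃ U V W : Set (Matrix (Fin n) (Fin n) ℝ),
      IsOpen U ∧ IsOpen V ∧ IsOpen W ∧
      (1 : Matrix (Fin n) (Fin n) ℝ) ∈ U ∧
      (1 : Matrix (Fin n) (Fin n) ℝ) ∈ V ∧
      (1 : Matrix (Fin n) (Fin n) ℝ) ∈ W ∧
      ∀ L ∈ W, ∃! p : Matrix (Fin n) (Fin n) ℝ × Matrix (Fin n) (Fin n) ℝ,
        p.1 ∈ U ∧ p.2 ∈ V ∧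
        p.1ᵀ * eta n * p.1 = eta n ∧
        eta n * p.2ᵀ = p.2 * eta n ∧
        L = p.1 * p.2 := by
  have hg1 : (sqPH n).symm 1 = 1 := by
    have h := (sqPH n).left_inv (one_mem_sqPH_source n)
    rw [sqPH_apply, one_mul] at h
    exact h
  refine ⟨Set.univ,
    (sqPH n).source ∩ sig n ⁻¹' (sqPH n).source ∩ {X | X.det ≠ 0},
    (fun L => sig n L * L) ⁻¹' (sqPH n).target ∩
      (fun L => (sqPH n).symm (sig n L * L)) ⁻¹' ((sqPH n).source ∩
        sig n ⁻¹' (sqPH n).source ∩ {X | X.det ≠ 0}),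
    isOpen_univ, ?_, ?_, trivial, ?_, ?_, ?_⟩
  case _ =>
    exact ((sqPH n).open_source.inter ((sqPH n).open_source.preimage (sig_continuous n))).inter
      (isOpen_compl_singleton.preimage continuous_id.matrix_det)
  case _ =>
    have hφcont : Continuous (fun L : Matrix (Fin n) (Fin n) ℝ => sig n L * L) :=
      (sig_continuous n).mul continuous_id
    have hVopen : IsOpen ((sqPH n).source ∩ sig n ⁻¹' (sqPH n).source ∩ {X | X.det ≠ 0}) :=
      ((sqPH n).open_source.inter ((sqPH n).open_source.preimage (sig_continuous n))).inter
        (isOpen_compl_singleton.preimage continuous_id.matrix_det)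
    have hcont : ContinuousOn (fun L => (sqPH n).symm (sig n L * L))
        ((fun L : Matrix (Fin n) (Fin n) ℝ => sig n L * L) ⁻¹' (sqPH n).target) :=
      (sqPH n).continuousOn_symm.comp hφcont.continuousOn (fun x hx => hx)
    exact hcont.isOpen_inter_preimage ((sqPH n).open_target.preimage hφcont) hVopen
  case _ =>
    refine ⟨⟨one_mem_sqPH_source n, ?_⟩, ?_⟩
    · simp only [Set.mem_preimage, sig_one]; exact one_mem_sqPH_source n
    · simp
  case _ =>
    constructor
    · show sig n 1 * 1 ∈ (sqPH n).target
      rw [sig_one, one_mul]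
      exact one_mem_sqPH_target n
    · simp only [Set.mem_preimage, sig_one, one_mul, hg1]
      refine ⟨⟨one_mem_sqPH_source n, ?_⟩, ?_⟩
      · simp only [Set.mem_preimage, sig_one]; exact one_mem_sqPH_source n
      · simp
  intro L hL
  obtain ⟨hMT, hAV⟩ := hL
  rw [Set.mem_preimage] at hMT hAV
  obtain ⟨⟨hAS', hσAS⟩, hdetA⟩ := hAV
  set M : Matrix (Fin n) (Fin n) ℝ := sig n L * L with hMdef
  set A : Matrix (Fin n) (Fin n) ℝ := (sqPH n).symm M with hAdef
  have hAS : A ∈ (sqPH n).source := (sqPH n).map_target hMT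
  have hA2 : A * A = M := by
    have h := (sqPH n).right_inv hMT
    rw [← hAdef, sqPH_apply] at h
    exact h
  have hσM : sig n M = M := by
    rw [hMdef, sig_mul, sig_sig]
  have hσA : sig n A = A := by
    have hFσA : sqPH n (sig n A) = sqPH n A := by
      rw [sqPH_apply, sqPH_apply, ← sig_mul, hA2, hσM, ← hA2]
    exact (sqPH n).injOn hσAS hAS hFσA
  have hdetA' : IsUnit A.det := isUnit_iff_ne_zero.mpr hdetA
  have hAinv : A * A⁻¹ = 1 := Matrix.mul_nonsing_inv A hdetA'
  have hinvA : A⁻¹ * A = 1 := Matrix.nonsing_inv_mul A hdetA'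
  have hpsA : eta n * Aᵀ = A * eta n := by
    have h := congrArg (fun X => X * eta n) hσA
    simp only [sig] at h
    rw [mul_assoc (eta n * Aᵀ), eta_mul_eta, mul_one] at h
    exact h
  have hσAinv : sig n A⁻¹ = A⁻¹ := sig_inv n A hAinv hσA
  have hΛσ : sig n (L * A⁻¹) * (L * A⁻¹) = 1 := by
    rw [sig_mul, hσAinv]
    calc A⁻¹ * sig n L * (L * A⁻¹) = A⁻¹ * (sig n L * L) * A⁻¹ := by
          simp only [mul_assoc]
    _ = A⁻¹ * (A * A) * A⁻¹ := by rw [← hMdef, ← hA2]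
    _ = (A⁻¹ * A) * (A * A⁻¹) := by simp only [mul_assoc]
    _ = 1 := by rw [hinvA, hAinv, one_mul]
  have hLor : (L * A⁻¹)ᵀ * eta n * (L * A⁻¹) = eta n := by
    have h := congrArg (fun X => eta n * X) hΛσ
    simp only [sig, mul_one] at h
    rw [show eta n * (eta n * (L * A⁻¹)ᵀ * eta n * (L * A⁻¹))
        = (eta n * eta n) * ((L * A⁻¹)ᵀ * eta n * (L * A⁻¹)) by simp only [mul_assoc],
      eta_mul_eta, one_mul] at h
    exact h
  have hLfac : L = (L * A⁻¹) * A := by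
    rw [mul_assoc, hinvA, mul_one]
  refine ⟨(L * A⁻¹, A), ⟨trivial, ⟨⟨hAS', hσAS⟩, hdetA⟩, hLor, hpsA, hLfac⟩, ?_⟩
  rintro ⟨Λ', A'⟩ ⟨-, hA'V, hLor', hps', hfac'⟩
  simp only at hLor' hps' hfac'
  obtain ⟨⟨hA'S, -⟩, -⟩ := hA'V
  simp only at hA'S
  have hσA' : sig n A' = A' := by
    unfold sig
    rw [show eta n * A'ᵀ * eta n = (eta n * A'ᵀ) * eta n from rfl, hps',
      mul_assoc, eta_mul_eta, mul_one]
  have hσΛ' : sig n Λ' * Λ' = 1 := by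
    unfold sig
    rw [show eta n * Λ'ᵀ * eta n * Λ' = eta n * (Λ'ᵀ * eta n * Λ') by
      simp only [mul_assoc], hLor', eta_mul_eta]
  have hM2 : M = A' * A' := by
    rw [hMdef, hfac', sig_mul]
    calc sig n A' * sig n Λ' * (Λ' * A') = sig n A' * (sig n Λ' * Λ') * A' := by
          simp only [mul_assoc]
    _ = sig n A' * A' := by rw [hσΛ', mul_one]
    _ = A' * A' := by rw [hσA']
  have hA'A : A' = A := by
    have hFA' : sqPH n A' = M := by rw [sqPH_apply, hM2]
    have h := (sqPH n).left_inv hA'S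
    rw [hFA'] at h
    rw [← h, ← hAdef]
  have hΛ'Λ : Λ' = L * A⁻¹ := by
    have hL' : Λ' * A = L := by rw [← hA'A]; exact hfac'.symm
    calc Λ' = Λ' * (A * A⁻¹) := by rw [hAinv, mul_one]
    _ = (Λ' * A) * A⁻¹ := by rw [mul_assoc]
    _ = L * A⁻¹ := by rw [hL']
  exact Prod.ext hΛ'Λ hA'A
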